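/- Let k be a field and let A = Algebra.adjoin k {X², X³} ⊆ k[X], viewed as a k-submodule of k[X]. Then the k-vector space k[X]/A has dimension 1; that is, the δ-invariant of the cusp singularity k[t², t³] equals 1. -/

import Mathlib

open Polynomial

lemma pow_mem_cusp (k : Type*) [Field k] :
    ∀ n : ℕ, (X : k[X]) ^ (n + 2) ∈ Algebra.adjoin k ({X ^ 2, X ^ 3} : Set k[X]) := by
  intro n
  induction n using Nat.twoStepInduction with
  | zero => exact Algebra.subset_adjoin (by simp)
  | one => exact Algebra.subset_adjoin (by simp)
  | more m ih _ =>
    have : (X : k[X]) ^ (m + 2 + 2) = X ^ (m + 2) * X ^ 2 := by ring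
    rw [this]
    exact mul_mem ih (Algebra.subset_adjoin (by simp))

lemma cusp_eq_ker (k : Type*) [Field k] :
    Subalgebra.toSubmodule (Algebra.adjoin k ({X ^ 2, X ^ 3} : Set k[X])) =
      LinearMap.ker (Polynomial.lcoeff k 1) := by
  apply le_antisymm
  · -- adjoin ≤ ker: ker is a subalgebra
    let K : Subalgebra k k[X] :=
      { carrier := {p | p.coeff 1 = 0}
        mul_mem' := by
          intro p q hp hq
          simp only [Set.mem_setOf_eq] at *
          rw [coeff_mul]
          rw [Finset.Nat.sum_antidiagonal_eq_sum_range_succ_mk]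
          simp [Finset.sum_range_succ, hp, hq]
        one_mem' := by simp [Set.mem_setOf_eq, coeff_one]
        add_mem' := by intro p q hp hq; simp_all
        algebraMap_mem' := by intro r; simp }
    have h : Algebra.adjoin k ({X ^ 2, X ^ 3} : Set k[X]) ≤ K := by
      apply Algebra.adjoin_le
      rintro p (rfl | rfl)
      · show ((X : k[X]) ^ 2).coeff 1 = 0
        simp [coeff_X_pow]
      · show ((X : k[X]) ^ 3).coeff 1 = 0
        simp [coeff_X_pow]
    intro p hp
    exact h hp
  · intro p hp
    simp only [LinearMap.mem_ker, lcoeff_apply] at hp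
    have hrep : p = p.sum fun n c => C c * X ^ n := (sum_C_mul_X_pow_eq p).symm
    rw [hrep]
    apply Submodule.sum_mem
    intro n hn
    have hn1 : n ≠ 1 := by
      rintro rfl
      exact (mem_support_iff.mp hn) hp
    have hx : (X : k[X]) ^ n ∈ Algebra.adjoin k ({X ^ 2, X ^ 3} : Set k[X]) := by
      match n, hn1 with
      | 0, _ => simpa using one_mem _
      | (m + 2), _ => exact pow_mem_cusp k m
    have : C (p.coeff n) * X ^ n = p.coeff n • (X ^ n) := by
      rw [smul_eq_C_mul]
    show C (p.coeff n) * X ^ n ∈ _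
    rw [this]
    exact Submodule.smul_mem _ _ hx

theorem stmt_12 (k : Type*) [Field k] :
    Module.finrank k
      (k[X] ⧸ Subalgebra.toSubmodule (Algebra.adjoin k ({X ^ 2, X ^ 3} : Set k[X]))) = 1 := by
  rw [cusp_eq_ker]
  have hsurj : Function.Surjective (Polynomial.lcoeff k 1) := by
    intro c
    exact ⟨C c * X, by simp⟩
  have e := LinearMap.quotKerEquivOfSurjective (Polynomial.lcoeff k 1) hsurj
  rw [e.finrank_eq, Module.finrank_self]
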